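/- Let R be a commutative ring with 1 and let k ≥ 1 be an integer. For 1 ≤ i ≤ k−1 let A_i ∈ M_k(R) be the matrix determined on the standard basis vectors e_1, …, e_k by: A_i e_j = e_j for j < i; A_i e_i = e_k; and A_i e_j = −e_{j−1} for i < j ≤ k. Let J ∈ M_k(R) be the antidiagonal matrix with entries J_{k+1−j, j} = (−1)^{j−1} for 1 ≤ j ≤ k and all other entries 0. Then the product A_1 · A_2 · ⋯ · A_{k−1} equals J (for k = 1 the empty product is the identity matrix, which equals J). -/
import Mathlib


open Matrix

/-- Let `R` be a commutative ring and `k ≥ 1`.  For `1 ≤ i ≤ k-1` let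
`A_i ∈ M_k(R)` be the matrix acting on the standard basis (`1`-based indexing) by
`A_i e_j = e_j` for `j < i`, `A_i e_i = e_k`, and `A_i e_j = -e_{j-1}` for `i < j ≤ k`.
Let `J` be the antidiagonal matrix with `J_{k+1-j, j} = (-1)^{j-1}`.  Then
`A_1 ⋯ A_{k-1} = J` (the empty product for `k = 1` being the identity, which equals `J`).

Here indices are encoded by `Fin k` (so `1`-based index `j` corresponds to `(j : Fin k)`
with `(j : ℕ) + 1 = j`). -/
theorem weyl_representative_matrix_product
    (R : Type*) [CommRing R] (k : ℕ) (hk : 1 ≤ k)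
    (A : ℕ → Matrix (Fin k) (Fin k) R)
    (hA : ∀ i : ℕ, 1 ≤ i → i ≤ k - 1 → ∀ a j : Fin k,
      A i a j =
        if (j : ℕ) + 1 < i then (if a = j then 1 else 0)
        else if (j : ℕ) + 1 = i then (if (a : ℕ) = k - 1 then 1 else 0)
        else (if (a : ℕ) + 1 = (j : ℕ) then -1 else 0))
    (J : Matrix (Fin k) (Fin k) R)
    (hJ : ∀ a j : Fin k,
      J a j = if (a : ℕ) = k - 1 - (j : ℕ) then (-1 : R) ^ (j : ℕ) else 0) :
    ((List.range (k - 1)).map fun i => A (i + 1)).prod = J := by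
  have key : ∀ m, m ≤ k - 1 → ∀ a j : Fin k,
      (((List.range m).map fun i => A (i + 1)).prod) a j =
        if (j : ℕ) < m then (if (a : ℕ) + (j : ℕ) = k - 1 then (-1 : R) ^ (j : ℕ) else 0)
        else (if (a : ℕ) + m = (j : ℕ) then (-1 : R) ^ m else 0) := by
    intro m
    induction m with
    | zero =>
      intro _ a j
      simp [Matrix.one_apply, Fin.ext_iff]
    | succ m ih =>
      intro hm a j
      rw [List.range_succ, List.map_append, List.prod_append, List.map_singleton,
        List.prod_singleton, Matrix.mul_apply]
      have hm' : m ≤ k - 1 := le_trans (Nat.le_succ m) hm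
      have hAe := hA (m + 1) (Nat.le_add_left 1 m) hm
      simp only [hAe]
      rcases lt_trichotomy (j : ℕ) m with h1 | h2 | h3
      · have h1' : (j : ℕ) + 1 < m + 1 := Nat.succ_lt_succ h1
        simp only [if_pos h1', mul_ite, mul_one, mul_zero, Finset.sum_ite_eq',
          Finset.mem_univ, if_pos]
        rw [ih hm' a j, if_pos h1, if_pos (by omega : (j : ℕ) < m + 1)]
      · have hc : k - 1 < k := by omega
        set c : Fin k := ⟨k - 1, hc⟩ with hcdef
        have h1' : ¬ ((j : ℕ) + 1 < m + 1) := by omega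
        have h2' : (j : ℕ) + 1 = m + 1 := by omega
        have hbc : ∀ b : Fin k, ((b : ℕ) = k - 1) = (b = c) := by
          intro b; simp [Fin.ext_iff, hcdef]
        simp only [if_neg h1', if_pos h2', hbc, mul_ite, mul_one, mul_zero,
          Finset.sum_ite_eq', Finset.mem_univ, if_pos]
        rw [ih hm' a c]
        have : ¬ ((c : ℕ) < m) := by simp [hcdef]; omega
        rw [if_neg this, if_pos (by omega : (j : ℕ) < m + 1)]
        simp only [hcdef]
        have hj : (j : ℕ) = m := by omega
        rw [hj]
      · have hd : (j : ℕ) - 1 < k := by omega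
        set d : Fin k := ⟨(j : ℕ) - 1, hd⟩ with hddef
        have h1' : ¬ ((j : ℕ) + 1 < m + 1) := by omega
        have h2' : ¬ ((j : ℕ) + 1 = m + 1) := by omega
        have hbd : ∀ b : Fin k, ((b : ℕ) + 1 = (j : ℕ)) = (b = d) := by
          intro b; simp [Fin.ext_iff, hddef]; omega
        simp only [if_neg h1', if_neg h2', hbd, mul_ite, mul_neg_one, mul_zero,
          Finset.sum_ite_eq', Finset.mem_univ, if_pos]
        rw [ih hm' a d]
        have hdm : ¬ ((d : ℕ) < m) := by simp [hddef]; omega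
        rw [if_neg hdm, if_neg (by omega : ¬ ((j : ℕ) < m + 1))]
        simp only [hddef]
        by_cases hcase : (a : ℕ) + m = (j : ℕ) - 1
        · rw [if_pos hcase, if_pos (by omega : (a : ℕ) + (m + 1) = (j : ℕ))]
          ring
        · rw [if_neg hcase, if_neg (by omega : ¬ ((a : ℕ) + (m + 1) = (j : ℕ)))]
          simp
  ext a j
  rw [key (k - 1) le_rfl a j, hJ]
  have hj : (j : ℕ) < k := j.isLt
  by_cases h : (j : ℕ) < k - 1
  · rw [if_pos h]
    by_cases hc : (a : ℕ) + (j : ℕ) = k - 1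
    · rw [if_pos hc, if_pos (by omega)]
    · rw [if_neg hc, if_neg (by omega)]
  · have hj' : (j : ℕ) = k - 1 := by omega
    rw [if_neg h]
    by_cases hc : (a : ℕ) + (k - 1) = (j : ℕ)
    · rw [if_pos hc, if_pos (by omega), hj']
    · rw [if_neg hc, if_neg (by omega)]
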